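/- In the Greedy Contraction Framework, the win of any full component never increases during the execution: for any full components C1, C2 one has save(M, C2) ≥ save(M/C1, C2) and save(M, C2) ≥ save(M/Loss(C1), C2). -/

import Mathlib

open Finset SimpleGraph
set_option linter.unusedSectionVars false

variable {V : Type*} [Fintype V] [DecidableEq V]

/-- Total cost of a finite set of edges. -/
def edgeCost (w : Sym2 V → ℝ) (T : Finset (Sym2 V)) : ℝ := ∑ e ∈ T, w e

/-- `T` is the edge set of a tree spanning exactly the vertex set `A`. -/
def IsTreeOn (A : Finset V) (T : Finset (Sym2 V)) : Prop :=
  (∀ e ∈ T, ∀ x ∈ e, x ∈ A) ∧ (∀ e ∈ T, ¬ e.IsDiag) ∧ T.card + 1 = A.card ∧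
    ∀ u ∈ A, ∀ v ∈ A, (SimpleGraph.fromEdgeSet (↑T : Set (Sym2 V))).Reachable u v

/-- Cost of a minimum spanning tree on vertex set `A` of the complete graph weighted by `w`. -/
noncomputable def mstCostOn (w : Sym2 V → ℝ) (A : Finset V) : ℝ :=
  sInf (edgeCost w '' {T | IsTreeOn A T})

/-- All (non-loop) pairs inside `S`. -/
def Rpairs (S : Finset V) : Set (Sym2 V) := {e | ∃ u ∈ S, ∃ v ∈ S, u ≠ v ∧ e = s(u, v)}

open Classical in
/-- Contracting the vertex set `S`: add zero-cost edges between all pairs of `S`. -/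
noncomputable def contractWeight (w : Sym2 V → ℝ) (S : Finset V) : Sym2 V → ℝ :=
  fun e => if e ∈ Rpairs S then 0 else w e

/-- `save(M, C)` where `M` is the complete graph on `A` weighted by `w` and
`S` is the terminal set of the full component `C`. -/
noncomputable def saveOn (w : Sym2 V → ℝ) (A S : Finset V) : ℝ :=
  mstCostOn w A - mstCostOn (contractWeight w S) A

/-- Vertices touched by an edge set. -/
def supportOf (T : Finset (Sym2 V)) : Finset V :=
  Finset.univ.filter (fun v => ∃ e ∈ T, v ∈ e)

/-- Degree of `v` in the edge set `T`. -/
def degIn (T : Finset (Sym2 V)) (v : V) : ℕ := (T.filter (fun e => v ∈ e)).card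

/-- `E` is a full component with vertex set `S` and terminal set `R`:
a tree on `S` whose set of leaves is exactly `R`. -/
def IsFullComponent (R S : Finset V) (E : Finset (Sym2 V)) : Prop :=
  IsTreeOn S E ∧ R ⊆ S ∧ ∀ v ∈ S, (degIn E v = 1 ↔ v ∈ R)

/-- The terminals of the component with edge set `E'` w.r.t. the global terminal set `R`. -/
def compR (R : Finset V) (E' : Finset (Sym2 V)) : Finset V := supportOf E' ∩ R

/-- `E'` is a full component w.r.t. the terminal set `R`. -/
def IsFullComponentOf (R : Finset V) (E' : Finset (Sym2 V)) : Prop :=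
  IsFullComponent (compR R E') (supportOf E') E'

/-- A Steiner tree for terminal set `R`: a tree containing all terminals. -/
def IsSteinerTree (R : Finset V) (T : Finset (Sym2 V)) : Prop :=
  IsTreeOn (supportOf T ∪ R) T

/-- `P` is a decomposition of the Steiner tree `T` into full components,
each with at most `k` terminals. -/
def KDecomposition (k : ℕ) (R : Finset V) (T : Finset (Sym2 V))
    (P : Finset (Finset (Sym2 V))) : Prop :=
  (∀ E' ∈ P, IsFullComponentOf R E' ∧ (compR R E').card ≤ k) ∧
  (∀ e ∈ T, ∃! E', E' ∈ P ∧ e ∈ E') ∧ (∀ E' ∈ P, E' ⊆ T)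

/-- `T` is a `k`-restricted Steiner tree. -/
def IsKRestricted (k : ℕ) (R : Finset V) (T : Finset (Sym2 V)) : Prop :=
  ∃ P, KDecomposition k R T P



/-! ### Auxiliary development for Statement 2 -/

section Aux

open Classical

private abbrev GG (T : Finset (Sym2 V)) : SimpleGraph V :=
  SimpleGraph.fromEdgeSet (↑T : Set (Sym2 V))

private lemma gg_adj {T : Finset (Sym2 V)} {x y : V} :
    (GG T).Adj x y ↔ s(x, y) ∈ T ∧ x ≠ y := by
  simp [SimpleGraph.fromEdgeSet_adj]

/-- Patch lemma: if every edge of `E'` has its endpoints reachable in `GG E`,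
then reachability in `GG E'` implies reachability in `GG E`. -/
private lemma reach_patch {E E' : Finset (Sym2 V)}
    (h : ∀ e ∈ E', ∀ x y : V, e = s(x, y) → (GG E).Reachable x y) :
    ∀ {a b : V}, (GG E').Reachable a b → (GG E).Reachable a b := by
  intro a b hr
  obtain ⟨W⟩ := hr
  induction W with
  | nil => exact Reachable.refl _
  | cons hadj W ih =>
    obtain ⟨hm, hne⟩ := gg_adj.mp hadj
    exact (h _ hm _ _ rfl).trans ih

private lemma first_step {T : Finset (Sym2 V)} {u v : V}
    (h : (GG T).Reachable u v) (hne : u ≠ v) : ∃ c, s(u, c) ∈ T ∧ u ≠ c := by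
  obtain ⟨W⟩ := h
  cases W with
  | nil => exact absurd rfl hne
  | cons hadj _ =>
    obtain ⟨hm, hne'⟩ := gg_adj.mp hadj
    exact ⟨_, hm, hne'⟩

private lemma reach_map {T T₂ : Finset (Sym2 V)} (sub : V → V)
    (h : ∀ e ∈ T, ¬ (Sym2.map sub e).IsDiag → Sym2.map sub e ∈ T₂) :
    ∀ {a b : V}, (GG T).Reachable a b → (GG T₂).Reachable (sub a) (sub b) := by
  intro a b hr
  obtain ⟨W⟩ := hr
  induction W with
  | nil => exact Reachable.refl _
  | cons hadj W ih =>
    obtain ⟨hm, hne⟩ := gg_adj.mp hadj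
    rename_i x y _
    by_cases hd : sub x = sub y
    · rw [hd]; exact ih
    · have hmap : Sym2.map sub s(x, y) = s(sub x, sub y) := by
        simp [Sym2.map_pair_eq]
      have hmem : s(sub x, sub y) ∈ T₂ := by
        have := h _ hm (by rw [hmap]; simpa [Sym2.mk_isDiag_iff] using hd)
        rwa [hmap] at this
      exact (gg_adj.mpr ⟨hmem, hd⟩).reachable.trans ih

/-- A connected graph on `A` has at least `A.card - 1` edges. -/
private lemma conn_card :
    ∀ (n : ℕ) (T : Finset (Sym2 V)) (A : Finset V), T.card ≤ n →
      (∀ e ∈ T, ∀ x ∈ e, x ∈ A) →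
      (∀ u ∈ A, ∀ v ∈ A, (GG T).Reachable u v) → A.card ≤ T.card + 1 := by
  intro n
  induction n with
  | zero =>
    intro T A hcard _ hconn
    have hT : T = ∅ := Finset.card_eq_zero.mp (Nat.le_zero.mp hcard)
    subst hT
    have : A.card ≤ 1 := by
      apply Finset.card_le_one.mpr
      intro a ha b hb
      by_contra hne
      obtain ⟨c, hc, -⟩ := first_step (hconn a ha b hb) hne
      simp at hc
    omega
  | succ n ih =>
    intro T A hcard hsupp hconn
    by_cases hA : A.card ≤ 1
    · omega
    · have h2 : 1 < A.card := by omega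
      obtain ⟨a, ha, b, hb, hab⟩ := Finset.one_lt_card.mp h2
      obtain ⟨c, he₀, hac⟩ := first_step (hconn a ha b hb) hab
      have hcA : c ∈ A := hsupp _ he₀ c (by simp)
      set sub : V → V := fun z => if z = a then c else z with hsub
      set T₂ : Finset (Sym2 V) :=
        (T.image (Sym2.map sub)).filter (fun e => ¬ e.IsDiag) with hT₂
      have hsubc : sub c = c := by simp [hsub, (Ne.symm hac)]
      have hsuba : sub a = c := by simp [hsub]
      have hccmem : s(c, c) ∈ T.image (Sym2.map sub) := by
        refine Finset.mem_image.mpr ⟨s(a, c), he₀, ?_⟩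
        simp [Sym2.map_pair_eq, hsuba, hsubc]
      have hccnot : s(c, c) ∉ T₂ := by
        simp [hT₂, Sym2.mk_isDiag_iff]
      have hcard₂ : T₂.card < T.card := by
        calc T₂.card < (T.image (Sym2.map sub)).card :=
              Finset.card_lt_card ⟨Finset.filter_subset _ _,
                fun hs => hccnot (hs hccmem)⟩
          _ ≤ T.card := Finset.card_image_le
      have hsupp₂ : ∀ e ∈ T₂, ∀ x ∈ e, x ∈ A.erase a := by
        intro e he x hx
        obtain ⟨e', he', rfl⟩ := Finset.mem_image.mp (Finset.mem_filter.mp he).1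
        obtain ⟨z, hz, rfl⟩ := Sym2.mem_map.mp hx
        have hzA : z ∈ A := hsupp _ he' z hz
        refine Finset.mem_erase.mpr ⟨?_, ?_⟩
        · by_cases hza : z = a <;> simp [hsub, hza, Ne.symm hac]
        · by_cases hza : z = a <;> simp [hsub, hza, hcA, hzA]
      have hconn₂ : ∀ u ∈ A.erase a, ∀ v ∈ A.erase a, (GG T₂).Reachable u v := by
        intro u hu v hv
        have hmap : ∀ e ∈ T, ¬ (Sym2.map sub e).IsDiag → Sym2.map sub e ∈ T₂ := by
          intro e he hd
          exact Finset.mem_filter.mpr ⟨Finset.mem_image.mpr ⟨e, he, rfl⟩, hd⟩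
        have := reach_map sub hmap
          (hconn u (Finset.mem_of_mem_erase hu) v (Finset.mem_of_mem_erase hv))
        have hu' : sub u = u := by simp [hsub, (Finset.mem_erase.mp hu).1]
        have hv' : sub v = v := by simp [hsub, (Finset.mem_erase.mp hv).1]
        rwa [hu', hv'] at this
      have := ih T₂ (A.erase a) (by omega) hsupp₂ hconn₂
      have hAe : (A.erase a).card + 1 = A.card := Finset.card_erase_add_one ha
      omega

/-- Removing an edge from a tree disconnects its endpoints. -/
private lemma tree_erase_not_reach {A : Finset V} {T : Finset (Sym2 V)}
    (hT : IsTreeOn A T) {u v : V} (he : s(u, v) ∈ T) :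
    ¬ (GG (T.erase s(u, v))).Reachable u v := by
  obtain ⟨hsupp, hnd, hcard, hconn⟩ := hT
  intro hr
  have hpatch : ∀ f ∈ T, ∀ x y : V, f = s(x, y) →
      (GG (T.erase s(u, v))).Reachable x y := by
    intro f hf x y hfxy
    by_cases hfe : f = s(u, v)
    · rw [hfe] at hfxy
      rcases Sym2.eq_iff.mp hfxy.symm with ⟨rfl, rfl⟩ | ⟨rfl, rfl⟩
      · exact hr
      · exact hr.symm
    · by_cases hxy : x = y
      · subst hxy; exact Reachable.refl _
      · refine (gg_adj.mpr ⟨?_, hxy⟩).reachable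
        exact Finset.mem_erase.mpr ⟨by rw [← hfxy]; exact hfe, by rw [← hfxy]; exact hf⟩
  have hconn' : ∀ x ∈ A, ∀ y ∈ A, (GG (T.erase s(u, v))).Reachable x y := by
    intro x hx y hy
    exact reach_patch hpatch (hconn x hx y hy)
  have hbound := conn_card (T.erase s(u, v)).card _ A le_rfl
    (fun e he' x hx => hsupp e (Finset.mem_of_mem_erase he') x hx) hconn'
  have : (T.erase s(u, v)).card + 1 = T.card := Finset.card_erase_add_one he
  omega

private lemma reach_insert {E : Finset (Sym2 V)} {u v : V} :
    ∀ {a b : V}, (GG (insert s(u, v) E)).Reachable a b →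
      (GG E).Reachable a b ∨
      ((GG E).Reachable a u ∧ (GG E).Reachable v b) ∨
      ((GG E).Reachable a v ∧ (GG E).Reachable u b) := by
  intro a b hr
  obtain ⟨W⟩ := hr
  induction W with
  | nil => exact Or.inl (Reachable.refl _)
  | cons hadj W ih =>
    obtain ⟨hm, hne⟩ := gg_adj.mp hadj
    rcases Finset.mem_insert.mp hm with heq | hmem
    · rcases Sym2.eq_iff.mp heq with ⟨rfl, rfl⟩ | ⟨rfl, rfl⟩
      · rcases ih with h | ⟨h1, h2⟩ | ⟨h1, h2⟩
        · exact Or.inr (Or.inl ⟨Reachable.refl _, h⟩)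
        · exact Or.inl (h1.symm.trans h2)
        · exact Or.inl h2
      · rcases ih with h | ⟨h1, h2⟩ | ⟨h1, h2⟩
        · exact Or.inr (Or.inr ⟨Reachable.refl _, h⟩)
        · exact Or.inl h2
        · exact Or.inl (h1.symm.trans h2)
    · have hstep : (GG E).Reachable _ _ := (gg_adj.mpr ⟨hmem, hne⟩).reachable
      rcases ih with h | ⟨h1, h2⟩ | ⟨h1, h2⟩
      · exact Or.inl (hstep.trans h)
      · exact Or.inr (Or.inl ⟨hstep.trans h1, h2⟩)
      · exact Or.inr (Or.inr ⟨hstep.trans h1, h2⟩)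

/-- Crossing lemma: a trail from a `P`-vertex to a non-`P`-vertex contains a
crossing edge, and the trail minus that edge still connects the pieces. -/
private lemma cross_edge {T : Finset (Sym2 V)} (P : V → Prop) :
    ∀ {a b : V} (W : (GG T).Walk a b), W.IsTrail → P a → ¬ P b →
      ∃ x y : V, s(x, y) ∈ T ∧ x ≠ y ∧ P x ∧ ¬ P y ∧
        (GG (T.erase s(x, y))).Reachable a x ∧
        (GG (T.erase s(x, y))).Reachable y b ∧ s(x, y) ∈ W.edges := by
  intro a b W
  induction W with
  | nil => intro _ hPa hPb; exact absurd hPa hPb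
  | cons hadj W ih =>
    intro htrail hPa hPb
    rename_i a' c b'
    obtain ⟨hm, hne⟩ := gg_adj.mp hadj
    have htrail' := (Walk.isTrail_cons _ _).mp htrail
    by_cases hPc : P c
    · obtain ⟨x, y, hxyT, hxy, hPx, hPy, r1, r2, hmem⟩ := ih htrail'.1 hPc hPb
      have hneq : s(a', c) ≠ s(x, y) := fun h => htrail'.2 (h ▸ hmem)
      have hadj' : (GG ((T.erase s(x, y)))).Adj a' c :=
        gg_adj.mpr ⟨Finset.mem_erase.mpr ⟨hneq, hm⟩, hne⟩
      exact ⟨x, y, hxyT, hxy, hPx, hPy, hadj'.reachable.trans r1, r2,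
        List.mem_cons_of_mem _ hmem⟩
    · refine ⟨a', c, hm, hne, hPa, hPc, Reachable.refl _, ?_, by simp⟩
      have hsub : ∀ f ∈ W.edges, f ∈ (GG (T.erase s(a', c))).edgeSet := by
        intro f hf
        have hfe : f ∈ (GG T).edgeSet := W.edges_subset_edgeSet hf
        rw [SimpleGraph.edgeSet_fromEdgeSet] at hfe ⊢
        refine ⟨?_, hfe.2⟩
        have : f ≠ s(a', c) := fun h => htrail'.2 (h ▸ hf)
        exact Finset.mem_coe.mpr (Finset.mem_erase.mpr ⟨this, Finset.mem_coe.mp hfe.1⟩)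
      exact (W.transfer _ hsub).reachable

/-- Star construction: a spanning tree exists on any nonempty vertex set. -/
private lemma exists_tree {A : Finset V} (hA : A.Nonempty) : ∃ T, IsTreeOn A T := by
  obtain ⟨a, ha⟩ := hA
  refine ⟨(A.erase a).image (fun v => s(a, v)), ?_, ?_, ?_, ?_⟩
  · intro e he x hx
    obtain ⟨v, hv, rfl⟩ := Finset.mem_image.mp he
    rcases Sym2.mem_iff.mp hx with rfl | rfl
    · exact ha
    · exact Finset.mem_of_mem_erase hv
  · intro e he
    obtain ⟨v, hv, rfl⟩ := Finset.mem_image.mp he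
    simpa [Sym2.mk_isDiag_iff] using Ne.symm (Finset.mem_erase.mp hv).1
  · rw [Finset.card_image_of_injOn, Finset.card_erase_add_one ha]
    intro u hu v hv h
    rcases Sym2.eq_iff.mp h with ⟨-, h2⟩ | ⟨h1, h2⟩
    · exact h2
    · exact h2.trans h1
  · have hstep : ∀ u ∈ A, (GG ((A.erase a).image (fun v => s(a, v)))).Reachable a u := by
      intro u hu
      by_cases hua : u = a
      · subst hua; exact Reachable.refl _
      · refine (gg_adj.mpr ⟨?_, Ne.symm hua⟩).reachable
        exact Finset.mem_image.mpr ⟨u, Finset.mem_erase.mpr ⟨hua, hu⟩, rfl⟩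
    intro u hu v hv
    exact (hstep u hu).symm.trans (hstep v hv)

private lemma treeSet_finite (A : Finset V) :
    ({T : Finset (Sym2 V) | IsTreeOn A T}).Finite :=
  Set.finite_univ.subset (Set.subset_univ _)

private lemma mst_le {w : Sym2 V → ℝ} {A : Finset V} {T : Finset (Sym2 V)}
    (h : IsTreeOn A T) : mstCostOn w A ≤ edgeCost w T :=
  csInf_le ((treeSet_finite A).image _).bddBelow ⟨T, h, rfl⟩

private lemma mst_spec {w : Sym2 V → ℝ} {A : Finset V} (hA : A.Nonempty) :
    ∃ T, IsTreeOn A T ∧ edgeCost w T = mstCostOn w A := by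
  obtain ⟨T₀, hT₀⟩ := exists_tree hA
  have hne : (edgeCost w '' {T | IsTreeOn A T}).Nonempty := ⟨_, T₀, hT₀, rfl⟩
  have := hne.csInf_mem ((treeSet_finite A).image _)
  obtain ⟨T, hT, hTc⟩ := this
  exact ⟨T, hT, hTc⟩

private lemma mst_empty (w : Sym2 V → ℝ) : mstCostOn w (∅ : Finset V) = 0 := by
  have : {T : Finset (Sym2 V) | IsTreeOn (∅ : Finset V) T} = ∅ := by
    ext T
    simp only [Set.mem_setOf_eq, Set.mem_empty_iff_false, iff_false]
    rintro ⟨-, -, hcard, -⟩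
    simp at hcard
  rw [mstCostOn, this]
  simp [Real.sInf_empty]

open Classical in
private noncomputable def zeroOn (X : Set (Sym2 V)) (v : Sym2 V → ℝ) : Sym2 V → ℝ :=
  fun e => if e ∈ X then 0 else v e

private lemma contract_eq (v : Sym2 V → ℝ) (S : Finset V) :
    contractWeight v S = zeroOn (Rpairs S) v := by
  funext e
  by_cases h : e ∈ Rpairs S <;> simp [contractWeight, zeroOn, h]

/-- The single-edge exchange step. -/
private lemma step_ineq (X : Set (Sym2 V)) (A : Finset V) (w w' : Sym2 V → ℝ)
    (h0 : ∀ e, 0 ≤ w e) (hle : ∀ e, w' e ≤ w e) (e₀ : Sym2 V)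
    (heq : ∀ e, e ≠ e₀ → w' e = w e) :
    mstCostOn w' A + mstCostOn (zeroOn X w) A ≤
      mstCostOn w A + mstCostOn (zeroOn X w') A := by
  rcases A.eq_empty_or_nonempty with rfl | hA
  · simp [mst_empty]
  induction e₀ using Sym2.ind with
  | _ u₀ v₀ =>
  obtain ⟨T, hT, hTc⟩ := mst_spec (w := w) hA
  have hww' : mstCostOn w' A ≤ mstCostOn w A := by
    calc mstCostOn w' A ≤ edgeCost w' T := mst_le hT
      _ ≤ edgeCost w T := Finset.sum_le_sum (fun e _ => hle e)
      _ = mstCostOn w A := hTc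
  have hzeq : ∀ e, e ≠ s(u₀, v₀) → zeroOn X w e = zeroOn X w' e := by
    intro e hne
    by_cases hx : e ∈ X <;> simp [zeroOn, hx, heq e hne]
  by_cases hX : s(u₀, v₀) ∈ X
  · have hzz : zeroOn X w' = zeroOn X w := by
      funext e
      by_cases hx : e ∈ X
      · simp [zeroOn, hx]
      · exact (hzeq e (by rintro rfl; exact hx hX)).symm
    rw [hzz]; linarith
  obtain ⟨T'', hT'', hT''c⟩ := mst_spec (w := zeroOn X w') hA
  by_cases he₀ : s(u₀, v₀) ∈ T''
  swap
  · -- e₀ not in the optimal tree for `zeroOn X w'`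
    have hcc : edgeCost (zeroOn X w) T'' = edgeCost (zeroOn X w') T'' :=
      Finset.sum_congr rfl (fun e he => hzeq e (fun h => he₀ (h ▸ he)))
    have h1 : mstCostOn (zeroOn X w) A ≤ mstCostOn (zeroOn X w') A := by
      calc mstCostOn (zeroOn X w) A ≤ edgeCost (zeroOn X w) T'' := mst_le hT''
        _ = edgeCost (zeroOn X w') T'' := hcc
        _ = mstCostOn (zeroOn X w') A := hT''c
    linarith
  by_cases heT : s(u₀, v₀) ∈ T
  · -- both optimal trees contain e₀
    have h1 : mstCostOn w' A ≤ mstCostOn w A - (w s(u₀, v₀) - w' s(u₀, v₀)) := by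
      have hd : edgeCost w T - edgeCost w' T = w s(u₀, v₀) - w' s(u₀, v₀) := by
        rw [edgeCost, edgeCost, ← Finset.sum_sub_distrib,
          Finset.sum_eq_single_of_mem _ heT]
        intro e he hne
        rw [heq e hne]; ring
      have := mst_le (w := w') hT
      linarith
    have h2 : mstCostOn (zeroOn X w) A ≤
        mstCostOn (zeroOn X w') A + (w s(u₀, v₀) - w' s(u₀, v₀)) := by
      have hd : edgeCost (zeroOn X w) T'' - edgeCost (zeroOn X w') T'' =
          w s(u₀, v₀) - w' s(u₀, v₀) := by
        rw [edgeCost, edgeCost, ← Finset.sum_sub_distrib,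
          Finset.sum_eq_single_of_mem _ he₀]
        · simp [zeroOn, hX]
        · intro e he hne
          rw [hzeq e hne]; ring
      have := mst_le (w := zeroOn X w) hT''
      linarith
    linarith
  · -- main exchange case : e₀ ∈ T'', e₀ ∉ T
    have huv : u₀ ≠ v₀ := by
      have := hT''.2.1 _ he₀
      simpa [Sym2.mk_isDiag_iff] using this
    have huA : u₀ ∈ A := hT''.1 _ he₀ u₀ (by simp)
    have hvA : v₀ ∈ A := hT''.1 _ he₀ v₀ (by simp)
    set E'' : Finset (Sym2 V) := T''.erase s(u₀, v₀) with hE''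
    have hnr : ¬ (GG E'').Reachable u₀ v₀ := tree_erase_not_reach hT'' he₀
    have hins : T'' = insert s(u₀, v₀) E'' := (Finset.insert_erase he₀).symm
    have hE''sub : E'' ⊆ T'' := Finset.erase_subset _ _
    have hsides : ∀ a ∈ A, (GG E'').Reachable a u₀ ∨ (GG E'').Reachable a v₀ := by
      intro a ha
      have hr : (GG T'').Reachable a u₀ := hT''.2.2.2 a ha u₀ huA
      rw [hins] at hr
      rcases reach_insert hr with h | ⟨h1, h2⟩ | ⟨h1, h2⟩
      · exact Or.inl h
      · exact absurd h2.symm hnr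
      · exact Or.inr h1
    obtain ⟨W⟩ := hT.2.2.2 u₀ huA v₀ hvA
    obtain ⟨x, y, hxyT, hxy, hPx, hPy, r1, r2, -⟩ :=
      cross_edge (fun z => (GG E'').Reachable u₀ z) (W.toPath : (GG T).Walk u₀ v₀)
        W.toPath.2.isTrail (Reachable.refl _) hnr
    have he₁E'' : s(x, y) ∉ E'' :=
      fun h => hPy (hPx.trans (gg_adj.mpr ⟨h, hxy⟩).reachable)
    have hxA : x ∈ A := hT.1 _ hxyT x (by simp)
    have hyA : y ∈ A := hT.1 _ hxyT y (by simp)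
    have hyv : (GG E'').Reachable y v₀ := by
      rcases hsides y hyA with h | h
      · exact absurd h.symm hPy
      · exact h
    -- the two exchanged trees
    have hnm₁ : s(u₀, v₀) ∉ T.erase s(x, y) :=
      fun h => heT (Finset.mem_of_mem_erase h)
    have htree₂ : IsTreeOn A (insert s(x, y) E'') := by
      refine ⟨?_, ?_, ?_, ?_⟩
      · intro e he z hz
        rcases Finset.mem_insert.mp he with rfl | he'
        · rcases Sym2.mem_iff.mp hz with rfl | rfl
          · exact hxA
          · exact hyA
        · exact hT''.1 _ (hE''sub he') z hz
      · intro e he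
        rcases Finset.mem_insert.mp he with rfl | he'
        · simpa [Sym2.mk_isDiag_iff] using hxy
        · exact hT''.2.1 _ (hE''sub he')
      · have h1 : E''.card + 1 = T''.card := Finset.card_erase_add_one he₀
        have h2 : T''.card + 1 = A.card := hT''.2.2.1
        rw [Finset.card_insert_of_notMem he₁E'']
        omega
      · have hmono : GG E'' ≤ GG (insert s(x, y) E'') :=
          SimpleGraph.fromEdgeSet_mono (by
            exact_mod_cast Finset.coe_subset.mpr (Finset.subset_insert _ _))
        have hadjxy : (GG (insert s(x, y) E'')).Adj x y :=
          gg_adj.mpr ⟨Finset.mem_insert_self _ _, hxy⟩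
        have huv₂ : (GG (insert s(x, y) E'')).Reachable u₀ v₀ :=
          ((hPx.mono hmono).trans hadjxy.reachable).trans (hyv.mono hmono)
        have hau : ∀ a ∈ A, (GG (insert s(x, y) E'')).Reachable a u₀ := by
          intro a ha
          rcases hsides a ha with h | h
          · exact h.mono hmono
          · exact (h.mono hmono).trans huv₂.symm
        intro a ha b hb
        exact (hau a ha).trans (hau b hb).symm
    have htree₁ : IsTreeOn A (insert s(u₀, v₀) (T.erase s(x, y))) := by
      refine ⟨?_, ?_, ?_, ?_⟩
      · intro e he z hz
        rcases Finset.mem_insert.mp he with rfl | he'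
        · rcases Sym2.mem_iff.mp hz with rfl | rfl
          · exact huA
          · exact hvA
        · exact hT.1 _ (Finset.mem_of_mem_erase he') z hz
      · intro e he
        rcases Finset.mem_insert.mp he with rfl | he'
        · simpa [Sym2.mk_isDiag_iff] using huv
        · exact hT.2.1 _ (Finset.mem_of_mem_erase he')
      · have h1 : (T.erase s(x, y)).card + 1 = T.card := Finset.card_erase_add_one hxyT
        have h2 : T.card + 1 = A.card := hT.2.2.1
        rw [Finset.card_insert_of_notMem hnm₁]
        omega
      · have hm1 : GG (T.erase s(x, y)) ≤ GG (insert s(u₀, v₀) (T.erase s(x, y))) :=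
          SimpleGraph.fromEdgeSet_mono (by
            exact_mod_cast Finset.coe_subset.mpr (Finset.subset_insert _ _))
        have hadjuv : (GG (insert s(u₀, v₀) (T.erase s(x, y)))).Adj u₀ v₀ :=
          gg_adj.mpr ⟨Finset.mem_insert_self _ _, huv⟩
        have rxy : (GG (insert s(u₀, v₀) (T.erase s(x, y)))).Reachable x y :=
          ((r1.mono hm1).symm.trans hadjuv.reachable).trans (r2.mono hm1).symm
        intro a ha b hb
        refine reach_patch ?_ (hT.2.2.2 a ha b hb)
        intro f hf p q hfpq
        by_cases hfe : f = s(x, y)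
        · rcases Sym2.eq_iff.mp (hfe.symm.trans hfpq) with ⟨rfl, rfl⟩ | ⟨rfl, rfl⟩
          · exact rxy
          · exact rxy.symm
        · by_cases hpq : p = q
          · subst hpq; exact Reachable.refl _
          · refine (gg_adj.mpr ⟨?_, hpq⟩).reachable
            refine Finset.mem_insert_of_mem (Finset.mem_erase.mpr ⟨?_, ?_⟩)
            · rw [← hfpq]; exact hfe
            · rw [← hfpq]; exact hf
    -- cost accounting
    have A1 : mstCostOn w' A ≤ edgeCost w' (insert s(u₀, v₀) (T.erase s(x, y))) :=
      mst_le htree₁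
    have A2 : mstCostOn (zeroOn X w) A ≤ edgeCost (zeroOn X w) (insert s(x, y) E'') :=
      mst_le htree₂
    have B1 : edgeCost w' (insert s(u₀, v₀) (T.erase s(x, y))) =
        w' s(u₀, v₀) + edgeCost w' (T.erase s(x, y)) := Finset.sum_insert hnm₁
    have B2 : edgeCost w' (T.erase s(x, y)) = edgeCost w (T.erase s(x, y)) :=
      Finset.sum_congr rfl
        (fun e he => heq e (fun h => heT (h ▸ Finset.mem_of_mem_erase he)))
    have B3 : edgeCost w (T.erase s(x, y)) + w s(x, y) = edgeCost w T :=
      Finset.sum_erase_add _ _ hxyT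
    have C1 : edgeCost (zeroOn X w) (insert s(x, y) E'') =
        zeroOn X w s(x, y) + edgeCost (zeroOn X w) E'' := Finset.sum_insert he₁E''
    have C2 : edgeCost (zeroOn X w) E'' = edgeCost (zeroOn X w') E'' :=
      Finset.sum_congr rfl (fun e he => hzeq e (Finset.mem_erase.mp he).1)
    have C3 : edgeCost (zeroOn X w') E'' + zeroOn X w' s(u₀, v₀) =
        edgeCost (zeroOn X w') T'' := Finset.sum_erase_add _ _ he₀
    have C4 : zeroOn X w' s(u₀, v₀) = w' s(u₀, v₀) := by simp [zeroOn, hX]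
    have C5 : zeroOn X w s(x, y) ≤ w s(x, y) := by
      by_cases hx : s(x, y) ∈ X <;> simp [zeroOn, hx, h0 _]
    linarith

/-- Save monotonicity for arbitrary pointwise decreases. -/
private lemma key_ineq (X : Set (Sym2 V)) (A : Finset V) (s : Finset (Sym2 V)) :
    ∀ (w w' : Sym2 V → ℝ), (∀ e, 0 ≤ w' e) → (∀ e, 0 ≤ w e) →
      (∀ e, w' e ≤ w e) → (∀ e ∉ s, w' e = w e) →
      mstCostOn w' A + mstCostOn (zeroOn X w) A ≤
        mstCostOn w A + mstCostOn (zeroOn X w') A := by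
  induction s using Finset.induction_on with
  | empty =>
    intro w w' _ _ _ h
    have hww : w' = w := funext (fun e => h e (by simp))
    rw [hww]
  | insert a s hnotmem ih =>
    intro w w' h0' h0 hle hs
    set mid : Sym2 V → ℝ := fun e => if e = a then w e else w' e with hmid
    have hmid0 : ∀ e, 0 ≤ mid e := fun e => by
      by_cases h : e = a <;> simp [hmid, h, h0 a, h0' e]
    have hmidle : ∀ e, mid e ≤ w e := fun e => by
      by_cases h : e = a <;> simp [hmid, h, hle e]
    have hmideq : ∀ e ∉ s, mid e = w e := by
      intro e he
      by_cases h : e = a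
      · simp [hmid, h]
      · have : e ∉ insert a s := by simp [h, he]
        simp [hmid, h, hs e this]
    have h1 := ih w mid hmid0 h0 hmidle hmideq
    have hle' : ∀ e, w' e ≤ mid e := fun e => by
      by_cases h : e = a <;> simp [hmid, h, hle a]
    have heq' : ∀ e, e ≠ a → w' e = mid e := fun e h => by simp [hmid, h]
    have h2 := step_ineq X A mid w' hmid0 hle' a heq'
    linarith

end Aux

/-- In the Greedy Contraction Framework the win (save) of a full
component never increases: for full components `C₁` (with terminal set `S₁`) and
`C₂` (with terminal set `S₂`), both `save(M, C₂) ≥ save(M/C₁, C₂)` and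
`save(M, C₂) ≥ save(M/Loss(C₁), C₂)`.  The contraction `M/C₁` is modeled by
`contractWeight w S₁` (zero-cost edges among `S₁`), and the loss-contraction
`M/Loss(C₁)` is modeled by lowering the weights only on pairs of terminals of
`C₁` to some nonnegative values `f` (adding the non-loss edges of `C₁`). -/
theorem win_never_increases
    (w f : Sym2 V → ℝ) (hw : ∀ e, 0 ≤ w e) (hf0 : ∀ e, 0 ≤ f e)
    (R S₁ S₂ : Finset V) (hS₁ : S₁ ⊆ R) (hS₂ : S₂ ⊆ R)
    (hf : ∀ e, e ∉ Rpairs S₁ → f e = w e) :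
    saveOn (contractWeight w S₁) R S₂ ≤ saveOn w R S₂ ∧
    saveOn (fun e => min (w e) (f e)) R S₂ ≤ saveOn w R S₂ := by
  constructor
  · have h0' : ∀ e, 0 ≤ contractWeight w S₁ e := fun e => by
      by_cases h : e ∈ Rpairs S₁ <;> simp [contractWeight, h, hw e]
    have hle : ∀ e, contractWeight w S₁ e ≤ w e := fun e => by
      by_cases h : e ∈ Rpairs S₁ <;> simp [contractWeight, h, hw e]
    have key := key_ineq (Rpairs S₂) R Finset.univ w (contractWeight w S₁)
      h0' hw hle (fun e he => absurd (Finset.mem_univ e) he)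
    rw [saveOn, saveOn, contract_eq (contractWeight w S₁) S₂, contract_eq w S₂]
    linarith
  · have h0' : ∀ e, 0 ≤ min (w e) (f e) := fun e => le_min (hw e) (hf0 e)
    have hle : ∀ e, min (w e) (f e) ≤ w e := fun e => min_le_left _ _
    have key := key_ineq (Rpairs S₂) R Finset.univ w (fun e => min (w e) (f e))
      h0' hw hle (fun e he => absurd (Finset.mem_univ e) he)
    rw [saveOn, saveOn, contract_eq (fun e => min (w e) (f e)) S₂, contract_eq w S₂]
    linarith
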